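/- Let γ ∈ (0, π/2), s = sin γ, c = cos γ. Let ψ : ℝ → ℝ³ be differentiable with ψ'(τ) = X ψ(τ) and ψ(0) = (0, s, c), and let χ : ℝ → ℝ³ be differentiable with χ'(τ) = Y χ(τ) and χ(0) = (0, s, c). Then for every τ with 0 < s τ < 2π one has ψ₃(τ) < χ₃(τ); that is, the X-arc strictly decreases the third component c while the Y-arc leaves it equal to c. -/
import Mathlib

open Matrix Real

/-- The generator of the global Grover operator in the large-block limit. -/
noncomputable def Xmat (γ : ℝ) : Matrix (Fin 3) (Fin 3) ℝ :=
  !![0, (sin γ)^2, sin γ * cos γ;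
     -(sin γ)^2, 0, 0;
     -(sin γ * cos γ), 0, 0]

/-- The generator of the local Grover operator in the large-block limit. -/
def Ymat : Matrix (Fin 3) (Fin 3) ℝ :=
  !![0, 1, 0; -1, 0, 0; 0, 0, 0]

lemma linear_ode_unique (M : Matrix (Fin 3) (Fin 3) ℝ) (f g : ℝ → Fin 3 → ℝ)
    (hf : ∀ t, HasDerivAt f (M *ᵥ f t) t)
    (hg : ∀ t, HasDerivAt g (M *ᵥ g t) t)
    (h0 : f 0 = g 0) {τ : ℝ} (hτ : 0 ≤ τ) : f τ = g τ := by
  set L : (Fin 3 → ℝ) →L[ℝ] (Fin 3 → ℝ) := LinearMap.toContinuousLinearMap M.mulVecLin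
  have hL : ∀ x, M *ᵥ x = L x := fun x => rfl
  have := ODE_solution_unique (v := fun _ x => L x) (K := ‖L‖₊) (f := f) (g := g)
    (a := 0) (b := τ) (fun _ => L.lipschitz)
    (fun t _ => ((hf t).continuousAt).continuousWithinAt)
    (fun t _ => (hf t).hasDerivWithinAt)
    (fun t _ => ((hg t).continuousAt).continuousWithinAt)
    (fun t _ => (hg t).hasDerivWithinAt)
    h0
  exact this (Set.mem_Icc.2 ⟨hτ, le_rfl⟩)

theorem stmt_18 (γ : ℝ) (hγ : γ ∈ Set.Ioo 0 (π/2))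
    (ψ χ : ℝ → Fin 3 → ℝ)
    (hψ : ∀ τ, HasDerivAt ψ (Xmat γ *ᵥ ψ τ) τ)
    (hψ0 : ψ 0 = ![0, sin γ, cos γ])
    (hχ : ∀ τ, HasDerivAt χ (Ymat *ᵥ χ τ) τ)
    (hχ0 : χ 0 = ![0, sin γ, cos γ]) :
    ∀ τ : ℝ, 0 < sin γ * τ → sin γ * τ < 2*π → ψ τ 2 < χ τ 2 := by
  obtain ⟨hγ0, hγ1⟩ := hγ
  have hs : 0 < sin γ := sin_pos_of_pos_of_lt_pi hγ0 (lt_trans hγ1 (by linarith [pi_pos]))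
  have hc : 0 < cos γ := cos_pos_of_mem_Ioo ⟨by linarith [pi_pos], hγ1⟩
  set s := sin γ with hsdef
  set c := cos γ with hcdef
  set f : ℝ → Fin 3 → ℝ := fun t => ![sin (s*t), s * cos (s*t), c * cos (s*t)] with hfdef
  set g : ℝ → Fin 3 → ℝ := fun t => ![s * sin t, s * cos t, c] with hgdef
  have hf : ∀ t, HasDerivAt f (Xmat γ *ᵥ f t) t := by
    intro t
    apply hasDerivAt_pi.2
    intro i
    have d1 : HasDerivAt (fun x : ℝ => sin (s*x)) (cos (s*t) * (s*1)) t :=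
      ((hasDerivAt_id t).const_mul s).sin
    have d2 : HasDerivAt (fun x : ℝ => s * cos (s*x)) (s * (-sin (s*t) * (s*1))) t :=
      (((hasDerivAt_id t).const_mul s).cos).const_mul s
    have d3 : HasDerivAt (fun x : ℝ => c * cos (s*x)) (c * (-sin (s*t) * (s*1))) t :=
      (((hasDerivAt_id t).const_mul s).cos).const_mul c
    have hpyth : s ^ 2 + c ^ 2 = 1 := by
      rw [hsdef, hcdef]; exact sin_sq_add_cos_sq γ
    fin_cases i <;>
      simp [hfdef, Xmat, ← hsdef, ← hcdef, Matrix.cons_mulVec, Matrix.cons_dotProduct]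
    · exact d1.congr_deriv (by linear_combination (-(cos (s*t) * s)) * hpyth)
    · exact d2.congr_deriv (by ring)
    · exact d3.congr_deriv (by ring)
  have hg : ∀ t, HasDerivAt g (Ymat *ᵥ g t) t := by
    intro t
    apply hasDerivAt_pi.2
    intro i
    have d1 : HasDerivAt (fun x : ℝ => s * sin x) (s * cos t) t :=
      (hasDerivAt_sin t).const_mul s
    have d2 : HasDerivAt (fun x : ℝ => s * cos x) (s * (-sin t)) t :=
      (hasDerivAt_cos t).const_mul s
    have d3 : HasDerivAt (fun _ : ℝ => c) 0 t := hasDerivAt_const t c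
    fin_cases i <;>
      simp [hgdef, Ymat, Matrix.cons_mulVec, Matrix.cons_dotProduct]
    · exact d1.congr_deriv (by ring)
    · exact d2.congr_deriv (by ring)
    · exact d3.congr_deriv (by ring)
  intro τ h1 h2
  have hτ0 : 0 < τ := by nlinarith
  have hτ0' : 0 ≤ τ := le_of_lt hτ0
  have hψf : ψ τ = f τ := by
    apply linear_ode_unique (Xmat γ) ψ f hψ hf _ hτ0'
    rw [hψ0, hfdef]
    simp
  have hχg : χ τ = g τ := by
    apply linear_ode_unique Ymat χ g hχ hg _ hτ0'
    rw [hχ0, hgdef]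
    simp
  rw [hψf, hχg]
  show c * cos (s*τ) < c
  have : cos (s*τ) < 1 := by
    have hne : cos (s*τ) ≠ 1 := by
      intro h
      rw [cos_eq_one_iff_of_lt_of_lt (by linarith) h2] at h
      linarith
    exact lt_of_le_of_ne (cos_le_one _) hne
  nlinarith
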